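/- The ring ℂ[x, y, z]/(x·y − z² − 1) is not a unique factorization domain. -/

import Mathlib

noncomputable section NotUFD5

abbrev TT5 : Type := LaurentPolynomial (Polynomial ℂ)

def fpol5 : MvPolynomial (Fin 3) ℂ := MvPolynomial.X 0 * MvPolynomial.X 1 - MvPolynomial.X 2 ^ 2 - 1

def Phi5 : MvPolynomial (Fin 3) ℂ →ₐ[ℂ] TT5 :=
  MvPolynomial.aeval
    ![LaurentPolynomial.T 1,
      LaurentPolynomial.C (Polynomial.X ^ 2 + 1) * LaurentPolynomial.T (-1),
      LaurentPolynomial.C Polynomial.X]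

lemma Phi5_X0 : Phi5 (MvPolynomial.X 0) = LaurentPolynomial.T 1 := by
  simp [Phi5]
lemma Phi5_X1 : Phi5 (MvPolynomial.X 1) =
    LaurentPolynomial.C (Polynomial.X ^ 2 + 1) * LaurentPolynomial.T (-1) := by
  simp [Phi5]
lemma Phi5_X2 : Phi5 (MvPolynomial.X 2) = LaurentPolynomial.C Polynomial.X := by
  simp [Phi5]

lemma Phi5_f : Phi5 fpol5 = 0 := by
  have h : LaurentPolynomial.T 1 * (LaurentPolynomial.C ((Polynomial.X : Polynomial ℂ) ^ 2 + 1)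
      * LaurentPolynomial.T (-1)) = LaurentPolynomial.C ((Polynomial.X : Polynomial ℂ) ^ 2 + 1) := by
    rw [mul_comm, mul_assoc, ← LaurentPolynomial.T_add]
    norm_num
  simp only [fpol5, map_sub, map_mul, map_pow, map_one, Phi5_X0, Phi5_X1, Phi5_X2, h]
  rw [← map_pow]
  rw [show (1 : TT5) = LaurentPolynomial.C 1 from rfl, ← map_sub, ← map_sub]
  simp

/-- Embedding of `ℂ[t][X]` into `ℂ[x,y,z]`: `X ↦ x`, `t ↦ z`. -/
def theta5 : Polynomial (Polynomial ℂ) →+* MvPolynomial (Fin 3) ℂ :=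
  Polynomial.eval₂RingHom
    (Polynomial.eval₂RingHom MvPolynomial.C (MvPolynomial.X 2)) (MvPolynomial.X 0)

lemma theta5_X : theta5 Polynomial.X = MvPolynomial.X 0 := by
  simp [theta5]

lemma Phi5_theta5 (r : Polynomial (Polynomial ℂ)) :
    Phi5 (theta5 r) = Polynomial.toLaurent r := by
  have inner_eq : (Phi5 : MvPolynomial (Fin 3) ℂ →+* TT5).comp
      (Polynomial.eval₂RingHom MvPolynomial.C (MvPolynomial.X 2))
      = (LaurentPolynomial.C : Polynomial ℂ →+* TT5) := by
    apply Polynomial.ringHom_ext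
    · intro a
      simp only [RingHom.comp_apply, Polynomial.coe_eval₂RingHom, Polynomial.eval₂_C]
      show Phi5 (MvPolynomial.C a) = _
      unfold Phi5
      rw [MvPolynomial.aeval_C]
      rfl
    · simp only [RingHom.comp_apply, Polynomial.coe_eval₂RingHom, Polynomial.eval₂_X]
      exact Phi5_X2
  have main : (Phi5 : MvPolynomial (Fin 3) ℂ →+* TT5).comp theta5
      = (Polynomial.toLaurent : Polynomial (Polynomial ℂ) →+* TT5) := by
    apply Polynomial.ringHom_ext
    · intro p
      have : theta5 (Polynomial.C p)
          = Polynomial.eval₂RingHom MvPolynomial.C (MvPolynomial.X 2) p := by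
        simp [theta5]
      rw [RingHom.comp_apply, this, Polynomial.toLaurent_C, ← inner_eq]
      rfl
    · rw [RingHom.comp_apply, theta5_X, Polynomial.toLaurent_X]
      exact Phi5_X0
  exact DFunLike.congr_fun main r

/-- Reduction: multiplying by a power of `x`, every polynomial is congruent mod `f`
to a polynomial in `x, z` only. -/
lemma red5 (P : MvPolynomial (Fin 3) ℂ) :
    ∃ (N : ℕ) (g : MvPolynomial (Fin 3) ℂ) (r : Polynomial (Polynomial ℂ)),
      MvPolynomial.X 0 ^ N * P = g * fpol5 + theta5 r := by
  induction P using MvPolynomial.induction_on with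
  | C a =>
      refine ⟨0, 0, Polynomial.C (Polynomial.C a), ?_⟩
      simp [theta5]
  | add p q hp hq =>
      obtain ⟨N1, g1, r1, h1⟩ := hp
      obtain ⟨N2, g2, r2, h2⟩ := hq
      refine ⟨N1 + N2, MvPolynomial.X 0 ^ N2 * g1 + MvPolynomial.X 0 ^ N1 * g2,
        Polynomial.X ^ N2 * r1 + Polynomial.X ^ N1 * r2, ?_⟩
      have e1 : theta5 (Polynomial.X ^ N2 * r1) = MvPolynomial.X 0 ^ N2 * theta5 r1 := by
        rw [map_mul, map_pow, theta5_X]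
      have e2 : theta5 (Polynomial.X ^ N1 * r2) = MvPolynomial.X 0 ^ N1 * theta5 r2 := by
        rw [map_mul, map_pow, theta5_X]
      rw [map_add, e1, e2]
      calc MvPolynomial.X 0 ^ (N1 + N2) * (p + q)
          = MvPolynomial.X 0 ^ N2 * (MvPolynomial.X 0 ^ N1 * p)
            + MvPolynomial.X 0 ^ N1 * (MvPolynomial.X 0 ^ N2 * q) := by ring
        _ = _ := by rw [h1, h2]; ring
  | mul_X p n hp =>
      obtain ⟨N, g, r, h⟩ := hp
      fin_cases n
      · refine ⟨N, g * MvPolynomial.X 0, Polynomial.X * r, ?_⟩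
        rw [map_mul, theta5_X]
        calc MvPolynomial.X 0 ^ N * (p * MvPolynomial.X 0)
            = MvPolynomial.X 0 * (MvPolynomial.X 0 ^ N * p) := by ring
          _ = _ := by rw [h]; ring
      · refine ⟨N + 1, (fpol5 + (MvPolynomial.X 2 ^ 2 + 1)) * g + theta5 r,
          Polynomial.C (Polynomial.X ^ 2 + 1) * r, ?_⟩
        have key : MvPolynomial.X 0 * MvPolynomial.X 1
            = fpol5 + (MvPolynomial.X 2 ^ 2 + 1) := by
          unfold fpol5; ring
        have e : theta5 (Polynomial.C (Polynomial.X ^ 2 + 1) * r)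
            = (MvPolynomial.X 2 ^ 2 + 1) * theta5 r := by
          rw [map_mul]
          congr 1
          simp [theta5, Polynomial.eval₂_pow]
        rw [e]
        calc MvPolynomial.X 0 ^ (N + 1) * (p * MvPolynomial.X 1)
            = (MvPolynomial.X 0 * MvPolynomial.X 1) * (MvPolynomial.X 0 ^ N * p) := by ring
          _ = (fpol5 + (MvPolynomial.X 2 ^ 2 + 1)) * (g * fpol5 + theta5 r) := by rw [key, h]
          _ = _ := by ring
      · refine ⟨N, g * MvPolynomial.X 2, Polynomial.C Polynomial.X * r, ?_⟩
        have e : theta5 (Polynomial.C Polynomial.X * r)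
            = MvPolynomial.X 2 * theta5 r := by
          rw [map_mul]
          congr 1
          simp [theta5]
        rw [e]
        calc MvPolynomial.X 0 ^ N * (p * MvPolynomial.X 2)
            = MvPolynomial.X 2 * (MvPolynomial.X 0 ^ N * p) := by ring
          _ = _ := by rw [h]; ring

lemma X0_not_mem : MvPolynomial.X 0 ∉ Ideal.span {fpol5} := by
  intro h
  rw [Ideal.mem_span_singleton'] at h
  obtain ⟨g, hg⟩ := h
  have := congrArg (MvPolynomial.aeval (![1, 2, 1] : Fin 3 → ℂ)) hg
  simp [fpol5] at this
  norm_num at this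

lemma ker5 (hpr : (Ideal.span {fpol5}).IsPrime) (P : MvPolynomial (Fin 3) ℂ)
    (h : Phi5 P = 0) : P ∈ Ideal.span {fpol5} := by
  obtain ⟨N, g, r, e⟩ := red5 P
  have hr : r = 0 := by
    have := congrArg Phi5 e
    rw [map_mul, map_add, map_mul, map_pow, h, mul_zero, Phi5_f, mul_zero, zero_add,
      Phi5_theta5] at this
    exact Polynomial.toLaurent_injective this.symm
  rw [hr, map_zero, add_zero] at e
  have hmem : MvPolynomial.X 0 ^ N * P ∈ Ideal.span {fpol5} := by
    rw [e]
    exact Ideal.mul_mem_left _ _ (Ideal.subset_span rfl)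
  clear e hr h
  induction N with
  | zero => simpa using hmem
  | succ n ih =>
      have : MvPolynomial.X 0 * (MvPolynomial.X 0 ^ n * P) ∈ Ideal.span {fpol5} := by
        rw [show MvPolynomial.X 0 * (MvPolynomial.X 0 ^ n * P)
          = MvPolynomial.X 0 ^ (n + 1) * P by ring]
        exact hmem
      rcases hpr.mem_or_mem this with h | h
      · exact absurd h X0_not_mem
      · exact ih h

/-- The subalgebra of Laurent polynomials whose coefficient in degree `-k` is divisible by
`(t²+1)^k`; it contains the image of `Phi5`. -/
def SS5 : Subalgebra ℂ TT5 where
  carrier := {F | ∀ k : ℕ, ((Polynomial.X : Polynomial ℂ) ^ 2 + 1) ^ k ∣ F.coeff (-(k : ℤ))}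
  add_mem' := by
    intro F G hF hG k
    have : (F + G).coeff (-(k : ℤ)) = F.coeff (-(k : ℤ)) + G.coeff (-(k : ℤ)) := rfl
    rw [this]
    exact dvd_add (hF k) (hG k)
  mul_mem' := by
    intro F G hF hG k
    have key : ∀ (H : TT5), (∀ j : ℕ, ((Polynomial.X : Polynomial ℂ) ^ 2 + 1) ^ j ∣ H.coeff (-(j : ℤ)))
        → ∀ i : ℤ, ((Polynomial.X : Polynomial ℂ) ^ 2 + 1) ^ ((-i).toNat) ∣ H.coeff i := by
      intro H hH i
      rcases le_or_gt 0 i with h | h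
      · simp [Int.toNat_of_nonpos (by omega : -i ≤ 0)]
      · have h1 : i = -(((-i).toNat : ℕ) : ℤ) := by omega
        have h2 := hH (-i).toNat
        rwa [← h1] at h2
    rw [AddMonoidAlgebra.mul_apply, Finsupp.sum]
    refine Finset.dvd_sum fun i _ => ?_
    rw [Finsupp.sum]
    refine Finset.dvd_sum fun j _ => ?_
    split_ifs with hij
    · have hd := mul_dvd_mul (key F hF i) (key G hG j)
      rw [← pow_add] at hd
      exact dvd_trans (pow_dvd_pow _ (by omega)) hd
    · exact dvd_zero _
  algebraMap_mem' := by
    intro c k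
    have : (algebraMap ℂ TT5 c) = LaurentPolynomial.C (Polynomial.C c) := rfl
    rw [this, LaurentPolynomial.C_apply]
    rcases Nat.eq_zero_or_pos k with h | h
    · simp [h]
    · have : ¬ (-(k : ℤ) = 0) := by omega
      simp [this]

lemma Phi5_mem_SS5 (P : MvPolynomial (Fin 3) ℂ) : Phi5 P ∈ SS5 := by
  induction P using MvPolynomial.induction_on with
  | C a =>
      have : Phi5 (MvPolynomial.C a) = algebraMap ℂ TT5 a := by
        unfold Phi5; rw [MvPolynomial.aeval_C]
      rw [this]
      exact SS5.algebraMap_mem a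
  | add p q hp hq =>
      rw [map_add]; exact SS5.add_mem hp hq
  | mul_X p n hp =>
      rw [map_mul]
      refine SS5.mul_mem hp ?_
      fin_cases n
      · show Phi5 (MvPolynomial.X 0) ∈ SS5
        rw [Phi5_X0]
        intro k
        rcases Nat.eq_zero_or_pos k with h | h
        · simp [h]
        · have : ¬ ((1 : ℤ) = -(k : ℤ)) := by omega
          rw [LaurentPolynomial.T_apply, if_neg this]
          exact dvd_zero _
      · show Phi5 (MvPolynomial.X 1) ∈ SS5
        rw [Phi5_X1, ← LaurentPolynomial.single_eq_C_mul_T]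
        intro k
        rw [AddMonoidAlgebra.coeff_single, Finsupp.single_apply]
        split_ifs with h
        · have : k = 1 := by omega
          subst this
          simp
        · exact dvd_zero _
      · show Phi5 (MvPolynomial.X 2) ∈ SS5
        rw [Phi5_X2]
        intro k
        rw [LaurentPolynomial.C_apply]
        split_ifs with h
        · have : k = 0 := by omega
          subst this
          simp
        · exact dvd_zero _

/-- Structure of solutions of `A * B = T 1` in `TT5`. -/
lemma unit5 {A B : TT5} (h : A * B = LaurentPolynomial.T 1) :
    ∃ (c : ℂ) (m : ℤ), c ≠ 0 ∧ A = LaurentPolynomial.C (Polynomial.C c) * LaurentPolynomial.T m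
      ∧ B = LaurentPolynomial.C (Polynomial.C c⁻¹) * LaurentPolynomial.T (1 - m) := by
  obtain ⟨n, A', hA⟩ := A.exists_T_pow
  obtain ⟨p, B', hB⟩ := B.exists_T_pow
  have hABmul : Polynomial.toLaurent (A' * B') = Polynomial.toLaurent
      ((Polynomial.X : Polynomial (Polynomial ℂ)) ^ (1 + n + p)) := by
    rw [map_mul, hA, hB, Polynomial.toLaurent_X_pow]
    rw [show A * LaurentPolynomial.T n * (B * LaurentPolynomial.T p)
      = (A * B) * LaurentPolynomial.T n * LaurentPolynomial.T p by ring, h,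
      ← LaurentPolynomial.T_add, ← LaurentPolynomial.T_add]
    congr 1
  have hAB : A' * B' = Polynomial.X ^ (1 + n + p) := Polynomial.toLaurent_injective hABmul
  have hdvd : A' ∣ Polynomial.X ^ (1 + n + p) := ⟨B', hAB.symm⟩
  rw [dvd_prime_pow Polynomial.prime_X _] at hdvd
  obtain ⟨i, hi, hass⟩ := hdvd
  obtain ⟨u, hu⟩ := hass.symm
  -- X ^ i * u = A', with u a unit
  have hu' : IsUnit (u : Polynomial (Polynomial ℂ)) := u.isUnit
  rw [Polynomial.isUnit_iff] at hu'
  obtain ⟨r, hr, hru⟩ := hu'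
  rw [Polynomial.isUnit_iff] at hr
  obtain ⟨c, hc, hcr⟩ := hr
  have hc0 : c ≠ 0 := hc.ne_zero
  have hA' : A' = Polynomial.X ^ i * Polynomial.C (Polynomial.C c) := by
    rw [← hu, ← hru, ← hcr]
  have hXne : (Polynomial.X : Polynomial (Polynomial ℂ)) ^ i ≠ 0 :=
    pow_ne_zero _ Polynomial.X_ne_zero
  have hB' : B' = Polynomial.C (Polynomial.C c⁻¹) * Polynomial.X ^ (1 + n + p - i) := by
    have hcancel : Polynomial.C (Polynomial.C c) * B' = Polynomial.X ^ (1 + n + p - i) := by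
      apply mul_left_cancel₀ hXne
      rw [show Polynomial.X ^ i * (Polynomial.C (Polynomial.C c) * B')
        = A' * B' by rw [hA']; ring, hAB, ← pow_add]
      congr 1
      omega
    calc B' = (Polynomial.C (Polynomial.C c⁻¹) * Polynomial.C (Polynomial.C c)) * B' := by
          rw [← map_mul, ← map_mul, inv_mul_cancel₀ hc0]
          simp
      _ = Polynomial.C (Polynomial.C c⁻¹) * (Polynomial.C (Polynomial.C c) * B') := by ring
      _ = _ := by rw [hcancel]
  refine ⟨c, (i : ℤ) - n, hc0, ?_, ?_⟩
  · have hA2 : A = Polynomial.toLaurent A' * LaurentPolynomial.T (-(n : ℤ)) := by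
      rw [hA, LaurentPolynomial.mul_T_assoc]
      simp
    rw [hA2, hA', map_mul, Polynomial.toLaurent_X_pow, Polynomial.toLaurent_C]
    rw [mul_comm (LaurentPolynomial.T (i : ℤ)), LaurentPolynomial.mul_T_assoc]
    congr 1
  · have hB2 : B = Polynomial.toLaurent B' * LaurentPolynomial.T (-(p : ℤ)) := by
      rw [hB, LaurentPolynomial.mul_T_assoc]
      simp
    rw [hB2, hB', map_mul, Polynomial.toLaurent_X_pow, Polynomial.toLaurent_C,
      LaurentPolynomial.mul_T_assoc]
    congr 1
    congr 1
    omega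

lemma Phi5_C (a : ℂ) : Phi5 (MvPolynomial.C a) = LaurentPolynomial.C (Polynomial.C a) := by
  unfold Phi5
  rw [MvPolynomial.aeval_C]
  rfl

end NotUFD5

open MvPolynomial in
/-- The ring `ℂ[x,y,z]/(x*y - z² - 1)` is not a unique factorization domain.
(The quotient is an integral domain since `x*y - z² - 1` is irreducible; this is
recorded as an instance hypothesis so that unique factorization can be stated.) -/
theorem stmt_5
    [IsDomain (MvPolynomial (Fin 3) ℂ ⧸
      Ideal.span {(X 0 * X 1 - X 2 ^ 2 - 1 : MvPolynomial (Fin 3) ℂ)})] :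
    ¬ UniqueFactorizationMonoid (MvPolynomial (Fin 3) ℂ ⧸
      Ideal.span {(X 0 * X 1 - X 2 ^ 2 - 1 : MvPolynomial (Fin 3) ℂ)}) := by
  intro hufd
  haveI hdom : IsDomain (MvPolynomial (Fin 3) ℂ ⧸ Ideal.span {fpol5}) := ‹_›
  haveI hufd' : UniqueFactorizationMonoid (MvPolynomial (Fin 3) ℂ ⧸ Ideal.span {fpol5}) := hufd
  have hpr : (Ideal.span {fpol5}).IsPrime := (Ideal.Quotient.isDomain_iff_prime _).mp hdom
  -- the lifted map to Laurent polynomials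
  have h0 : ∀ a ∈ Ideal.span {fpol5}, Phi5 a = 0 := by
    intro a ha
    rw [Ideal.mem_span_singleton] at ha
    obtain ⟨c, rfl⟩ := ha
    rw [map_mul, Phi5_f, zero_mul]
  set PhiBar : (MvPolynomial (Fin 3) ℂ ⧸ Ideal.span {fpol5}) →+* TT5 :=
    Ideal.Quotient.lift (Ideal.span {fpol5}) (Phi5 : MvPolynomial (Fin 3) ℂ →+* TT5) h0
    with hPhiBar
  have hPB : ∀ P, PhiBar (Ideal.Quotient.mk (Ideal.span {fpol5}) P) = Phi5 P :=
    fun P => Ideal.Quotient.lift_mk (Ideal.span {fpol5}) _ h0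
  have hinj : Function.Injective PhiBar := by
    rw [injective_iff_map_eq_zero]
    intro q hq
    obtain ⟨P, rfl⟩ := Ideal.Quotient.mk_surjective q
    rw [hPB] at hq
    exact (Ideal.Quotient.eq_zero_iff_mem).mpr (ker5 hpr P hq)
  -- evaluation maps at (0,0,I) and (0,0,-I)
  have hevI0 : ∀ a ∈ Ideal.span {fpol5},
      (MvPolynomial.aeval (![0, 0, Complex.I] : Fin 3 → ℂ)).toRingHom a = 0 := by
    intro a ha
    rw [Ideal.mem_span_singleton] at ha
    obtain ⟨c, rfl⟩ := ha
    simp [fpol5, Complex.I_sq]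
  have hevmI0 : ∀ a ∈ Ideal.span {fpol5},
      (MvPolynomial.aeval (![0, 0, -Complex.I] : Fin 3 → ℂ)).toRingHom a = 0 := by
    intro a ha
    rw [Ideal.mem_span_singleton] at ha
    obtain ⟨c, rfl⟩ := ha
    simp [fpol5]
  set evI : (MvPolynomial (Fin 3) ℂ ⧸ Ideal.span {fpol5}) →+* ℂ :=
    Ideal.Quotient.lift (Ideal.span {fpol5}) _ hevI0 with hevIdef
  set evmI : (MvPolynomial (Fin 3) ℂ ⧸ Ideal.span {fpol5}) →+* ℂ :=
    Ideal.Quotient.lift (Ideal.span {fpol5}) _ hevmI0 with hevmIdef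
  have hevI : ∀ P, evI (Ideal.Quotient.mk (Ideal.span {fpol5}) P)
      = MvPolynomial.aeval (![0, 0, Complex.I] : Fin 3 → ℂ) P :=
    fun P => Ideal.Quotient.lift_mk (Ideal.span {fpol5}) _ hevI0
  have hevmI : ∀ P, evmI (Ideal.Quotient.mk (Ideal.span {fpol5}) P)
      = MvPolynomial.aeval (![0, 0, -Complex.I] : Fin 3 → ℂ) P :=
    fun P => Ideal.Quotient.lift_mk (Ideal.span {fpol5}) _ hevmI0
  -- the element x is not a unit
  have hx_notunit : ¬ IsUnit (Ideal.Quotient.mk (Ideal.span {fpol5}) (MvPolynomial.X 0)) := by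
    intro h
    have h1 := h.map evI
    rw [hevI] at h1
    simp only [MvPolynomial.aeval_X] at h1
    rw [show (![0, 0, Complex.I] : Fin 3 → ℂ) 0 = 0 from rfl] at h1
    rw [isUnit_zero_iff] at h1
    exact zero_ne_one h1
  -- the element x is irreducible
  have hx_irr : Irreducible (Ideal.Quotient.mk (Ideal.span {fpol5}) (MvPolynomial.X 0)) := by
    refine ⟨hx_notunit, ?_⟩
    intro a b hab
    obtain ⟨Pa, rfl⟩ := Ideal.Quotient.mk_surjective a
    obtain ⟨Pb, rfl⟩ := Ideal.Quotient.mk_surjective b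
    have hT : Phi5 Pa * Phi5 Pb = LaurentPolynomial.T 1 := by
      have h1 := congrArg PhiBar hab
      rw [map_mul, hPB, hPB, hPB, Phi5_X0] at h1
      exact h1.symm
    obtain ⟨c, m, hc0, hA, hB⟩ := unit5 hT
    -- bounds on m from membership in SS5
    have coeff_lemma : ∀ (P : MvPolynomial (Fin 3) ℂ) (d : ℂ) (e : ℤ),
        Phi5 P = LaurentPolynomial.C (Polynomial.C d) * LaurentPolynomial.T e → d ≠ 0 →
        0 ≤ e := by
      intro P d e hP hd
      by_contra hneg
      push_neg at hneg
      set k : ℕ := (-e).toNat with hk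
      have hk1 : 1 ≤ k := by omega
      have hmem := Phi5_mem_SS5 P k
      rw [hP, ← LaurentPolynomial.single_eq_C_mul_T] at hmem
      have he : -((k : ℤ)) = e := by omega
      rw [he, AddMonoidAlgebra.coeff_single, Finsupp.single_apply, if_pos rfl] at hmem
      obtain ⟨q, hq⟩ := hmem
      have heval := congrArg (Polynomial.eval Complex.I) hq
      have hbase : Polynomial.eval Complex.I ((Polynomial.X : Polynomial ℂ) ^ 2 + 1) = 0 := by
        simp [Complex.I_sq]
      rw [Polynomial.eval_C, Polynomial.eval_mul, Polynomial.eval_pow, hbase,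
        zero_pow (by omega : k ≠ 0), zero_mul] at heval
      exact hd heval
    have hm0 : 0 ≤ m := coeff_lemma Pa c m hA hc0
    have hm1 : 0 ≤ 1 - m := coeff_lemma Pb c⁻¹ (1 - m) hB (inv_ne_zero hc0)
    have hm : m = 0 ∨ m = 1 := by omega
    rcases hm with hm | hm
    · left
      subst hm
      rw [LaurentPolynomial.T_zero, mul_one] at hA
      have heq : Ideal.Quotient.mk (Ideal.span {fpol5}) Pa
          = Ideal.Quotient.mk (Ideal.span {fpol5}) (MvPolynomial.C c) := by
        apply hinj
        rw [hPB, hPB, hA, Phi5_C]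
      rw [heq]
      exact (isUnit_iff_ne_zero.mpr hc0).map
        ((Ideal.Quotient.mk (Ideal.span {fpol5})).comp (MvPolynomial.C : ℂ →+* _))
    · right
      subst hm
      have hB' : Phi5 Pb = LaurentPolynomial.C (Polynomial.C c⁻¹) := by
        rw [hB, show (1 : ℤ) - 1 = 0 by norm_num, LaurentPolynomial.T_zero, mul_one]
      have heq : Ideal.Quotient.mk (Ideal.span {fpol5}) Pb
          = Ideal.Quotient.mk (Ideal.span {fpol5}) (MvPolynomial.C c⁻¹) := by
        apply hinj
        rw [hPB, hPB, hB', Phi5_C]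
      rw [heq]
      exact (isUnit_iff_ne_zero.mpr (inv_ne_zero hc0)).map
        ((Ideal.Quotient.mk (Ideal.span {fpol5})).comp (MvPolynomial.C : ℂ →+* _))
  -- x is prime since we are in a UFD
  have hprime : Prime (Ideal.Quotient.mk (Ideal.span {fpol5}) (MvPolynomial.X 0)) :=
    hufd'.irreducible_iff_prime.mp hx_irr
  -- but x divides (z+i)(z-i) without dividing either factor
  have hI : (MvPolynomial.C Complex.I : MvPolynomial (Fin 3) ℂ) * MvPolynomial.C Complex.I
      = -1 := by
    rw [← map_mul, Complex.I_mul_I, map_neg, map_one]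
  have key : (MvPolynomial.X 2 + MvPolynomial.C Complex.I) *
      (MvPolynomial.X 2 - MvPolynomial.C Complex.I)
      - MvPolynomial.X 0 * MvPolynomial.X 1 = (-1 : MvPolynomial (Fin 3) ℂ) * fpol5 := by
    unfold fpol5
    linear_combination (-1 : MvPolynomial (Fin 3) ℂ) * hI
  have hdvd : Ideal.Quotient.mk (Ideal.span {fpol5}) (MvPolynomial.X 0) ∣
      Ideal.Quotient.mk (Ideal.span {fpol5}) (MvPolynomial.X 2 + MvPolynomial.C Complex.I)
      * Ideal.Quotient.mk (Ideal.span {fpol5}) (MvPolynomial.X 2 - MvPolynomial.C Complex.I) := by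
    refine ⟨Ideal.Quotient.mk (Ideal.span {fpol5}) (MvPolynomial.X 1), ?_⟩
    rw [← map_mul, ← map_mul]
    rw [Ideal.Quotient.mk_eq_mk_iff_sub_mem, key]
    exact Ideal.mul_mem_left _ _ (Ideal.subset_span rfl)
  rcases hprime.2.2 _ _ hdvd with h | h
  · obtain ⟨w, hw⟩ := h
    have h1 := congrArg evI hw
    rw [map_mul, hevI, hevI] at h1
    simp only [map_add, MvPolynomial.aeval_X, MvPolynomial.aeval_C] at h1
    rw [show (![0, 0, Complex.I] : Fin 3 → ℂ) 2 = Complex.I from rfl,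
      show (![0, 0, Complex.I] : Fin 3 → ℂ) 0 = 0 from rfl, zero_mul] at h1
    have h2 : Complex.I = 0 := by
      have : algebraMap ℂ ℂ Complex.I = Complex.I := by simp
      rw [this] at h1
      linear_combination (1/2 : ℂ) * h1
    exact Complex.I_ne_zero h2
  · obtain ⟨w, hw⟩ := h
    have h1 := congrArg evmI hw
    rw [map_mul, hevmI, hevmI] at h1
    simp only [map_sub, MvPolynomial.aeval_X, MvPolynomial.aeval_C] at h1
    rw [show (![0, 0, -Complex.I] : Fin 3 → ℂ) 2 = -Complex.I from rfl,
      show (![0, 0, -Complex.I] : Fin 3 → ℂ) 0 = 0 from rfl, zero_mul] at h1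
    have h2 : Complex.I = 0 := by
      have : algebraMap ℂ ℂ Complex.I = Complex.I := by simp
      rw [this] at h1
      linear_combination (-1/2 : ℂ) * h1
    exact Complex.I_ne_zero h2
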